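/- Let K : 𝒦 → E and Q : 𝒦 → F be bounded linear operators between Banach spaces (𝒦 a Hilbert space), and assume Q is surjective. Then the restriction K : ker Q → E is a Fredholm operator (of index l) if and only if the direct sum map K ⊕ Q : 𝒦 → E ⊕ F, u ↦ (Ku, Qu), is Fredholm (of index l). -/

import Mathlib

set_option maxHeartbeats 1000000

lemma exists_contRightInverse {𝒦 F : Type*} [NormedAddCommGroup 𝒦] [InnerProductSpace ℂ 𝒦]
    [CompleteSpace 𝒦] [NormedAddCommGroup F] [NormedSpace ℂ F] [CompleteSpace F]
    (Q : 𝒦 →L[ℂ] F) (hQ : Function.Surjective Q) :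
    ∃ R : F →L[ℂ] 𝒦, ∀ f, Q (R f) = f := by
  set V := (LinearMap.ker (Q : 𝒦 →ₗ[ℂ] F))ᗮ with hV
  haveI : CompleteSpace V := (Submodule.isClosed_orthogonal _).completeSpace_coe
  haveI : CompleteSpace (LinearMap.ker (Q : 𝒦 →ₗ[ℂ] F)) :=
    (ContinuousLinearMap.isClosed_ker Q).completeSpace_coe
  set QV : V →L[ℂ] F := Q.comp V.subtypeL with hQV
  have hinj : LinearMap.ker (QV : V →ₗ[ℂ] F) = ⊥ := by
    rw [LinearMap.ker_eq_bot]
    intro v w hvw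
    ext
    have hv : (v : 𝒦) - (w : 𝒦) ∈ LinearMap.ker (Q : 𝒦 →ₗ[ℂ] F) := by
      simp only [LinearMap.mem_ker, map_sub]
      simpa [hQV] using sub_eq_zero.mpr hvw
    have hv2 : (v : 𝒦) - (w : 𝒦) ∈ V := sub_mem v.2 w.2
    have := (Submodule.mem_orthogonal _ _).mp hv2 _ hv
    rw [inner_self_eq_zero] at this
    exact sub_eq_zero.mp this
  have hsurj : LinearMap.range (QV : V →ₗ[ℂ] F) = ⊤ := by
    rw [LinearMap.range_eq_top]
    intro f
    obtain ⟨u, hu⟩ := hQ f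
    refine ⟨⟨u - (Submodule.orthogonalProjectionOnto (LinearMap.ker (Q : 𝒦 →ₗ[ℂ] F)) u : 𝒦),
      Submodule.sub_starProjection_mem_orthogonal (K := LinearMap.ker (Q : 𝒦 →ₗ[ℂ] F)) u⟩, ?_⟩
    have : Q ((LinearMap.ker (Q : 𝒦 →ₗ[ℂ] F)).starProjection u) = 0 :=
      (Submodule.orthogonalProjectionOnto (LinearMap.ker (Q : 𝒦 →ₗ[ℂ] F)) u).2
    simp [hQV, this, hu]
  refine ⟨V.subtypeL.comp
    ((ContinuousLinearEquiv.ofBijective QV hinj hsurj).symm : F →L[ℂ] V), fun f => ?_⟩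
  have := ContinuousLinearEquiv.ofBijective_apply_symm_apply QV hinj hsurj f
  exact this


/-- The Fredholm index: `dim ker − dim coker` (as an integer, with the convention
`finrank = 0` in the infinite-dimensional case). -/
noncomputable def fredholmIndex {E F : Type*}
    [NormedAddCommGroup E] [NormedSpace ℂ E] [NormedAddCommGroup F] [NormedSpace ℂ F]
    (T : E →L[ℂ] F) : ℤ :=
  (Module.finrank ℂ (LinearMap.ker (T : E →ₗ[ℂ] F)) : ℤ) -
    (Module.finrank ℂ (F ⧸ LinearMap.range (T : E →ₗ[ℂ] F)) : ℤ)

/-- A bounded operator is Fredholm if it has finite-dimensional kernel and cokernel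
and closed range. -/
def IsFredholm {E F : Type*}
    [NormedAddCommGroup E] [NormedSpace ℂ E] [NormedAddCommGroup F] [NormedSpace ℂ F]
    (T : E →L[ℂ] F) : Prop :=
  FiniteDimensional ℂ (LinearMap.ker (T : E →ₗ[ℂ] F)) ∧
  FiniteDimensional ℂ (F ⧸ LinearMap.range (T : E →ₗ[ℂ] F)) ∧
  IsClosed (LinearMap.range (T : E →ₗ[ℂ] F) : Set F)

/-- with `K : 𝒦 → E`, `Q : 𝒦 → F` bounded, `Q` surjective, the restriction
of `K` to `ker Q` is Fredholm of index `l` iff `K ⊕ Q : 𝒦 → E × F` is Fredholm of index `l`. -/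
theorem fredholm_restriction_iff_prod
    {𝒦 E F : Type*} [NormedAddCommGroup 𝒦] [InnerProductSpace ℂ 𝒦] [CompleteSpace 𝒦]
    [NormedAddCommGroup E] [NormedSpace ℂ E] [CompleteSpace E]
    [NormedAddCommGroup F] [NormedSpace ℂ F] [CompleteSpace F]
    (K : 𝒦 →L[ℂ] E) (Q : 𝒦 →L[ℂ] F) (hQ : Function.Surjective Q) (l : ℤ) :
    (IsFredholm (K.comp (LinearMap.ker (Q : 𝒦 →ₗ[ℂ] F)).subtypeL) ∧
        fredholmIndex (K.comp (LinearMap.ker (Q : 𝒦 →ₗ[ℂ] F)).subtypeL) = l) ↔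
      (IsFredholm (K.prod Q) ∧ fredholmIndex (K.prod Q) = l) := by
  obtain ⟨R, hR⟩ := exists_contRightInverse Q hQ
  set T₀ : (LinearMap.ker (Q : 𝒦 →ₗ[ℂ] F)) →L[ℂ] E := K.comp (LinearMap.ker (Q : 𝒦 →ₗ[ℂ] F)).subtypeL with hT₀
  set T : 𝒦 →L[ℂ] (E × F) := K.prod Q with hT
  -- kernel identification
  have hker : LinearMap.ker (T : 𝒦 →ₗ[ℂ] (E × F)) =
      Submodule.map (LinearMap.ker (Q : 𝒦 →ₗ[ℂ] F)).subtype (LinearMap.ker (T₀ : (LinearMap.ker (Q : 𝒦 →ₗ[ℂ] F)) →ₗ[ℂ] E)) := by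
    ext u
    constructor
    · intro hu
      have h1 : K u = 0 ∧ Q u = 0 := Prod.mk_eq_zero.mp hu
      exact ⟨⟨u, h1.2⟩, by simpa [hT₀] using h1.1, rfl⟩
    · rintro ⟨⟨v, hv⟩, hv0, rfl⟩
      have : K v = 0 := by simpa [hT₀] using hv0
      simp [hT, LinearMap.mem_ker, ContinuousLinearMap.prod_apply, Prod.mk_eq_zero, this, hv]
  let eker : (LinearMap.ker (T₀ : (LinearMap.ker (Q : 𝒦 →ₗ[ℂ] F)) →ₗ[ℂ] E)) ≃ₗ[ℂ] (LinearMap.ker (T : 𝒦 →ₗ[ℂ] (E × F))) :=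
    (Submodule.equivMapOfInjective (LinearMap.ker (Q : 𝒦 →ₗ[ℂ] F)).subtype
      (Submodule.injective_subtype _) (LinearMap.ker (T₀ : (LinearMap.ker (Q : 𝒦 →ₗ[ℂ] F)) →ₗ[ℂ] E))).trans
      (LinearEquiv.ofEq _ _ hker.symm)
  -- the shear map
  let Φ : (E × F) ≃L[ℂ] (E × F) :=
    (ContinuousLinearEquiv.prodComm ℂ E F).trans
      (((ContinuousLinearEquiv.refl ℂ F).skewProd (ContinuousLinearEquiv.refl ℂ E)
        (K.comp R)).trans (ContinuousLinearEquiv.prodComm ℂ F E))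
  have hΦ : ∀ p : E × F, Φ p = (p.1 + K (R p.2), p.2) := by
    intro p
    simp [Φ, ContinuousLinearEquiv.skewProd_apply]
  have hcoe : ⇑(Φ.toLinearEquiv : (E × F) →ₗ[ℂ] (E × F)) = ⇑Φ := rfl
  -- range identification
  have hrange : Submodule.map (Φ.toLinearEquiv : (E × F) →ₗ[ℂ] (E × F))
      ((LinearMap.range (T₀ : (LinearMap.ker (Q : 𝒦 →ₗ[ℂ] F)) →ₗ[ℂ] E)).prod (⊤ : Submodule ℂ F)) = LinearMap.range (T : 𝒦 →ₗ[ℂ] (E × F)) := by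
    ext p
    simp only [Submodule.mem_map, Submodule.mem_prod, LinearMap.mem_range,
      Submodule.mem_top, and_true]
    constructor
    · rintro ⟨⟨e, f⟩, ⟨u₀, hu₀⟩, hp⟩
      refine ⟨(u₀ : 𝒦) + R f, ?_⟩
      rw [hcoe] at hp
      rw [← hp, hΦ]
      have hKu : K (u₀ : 𝒦) = e := hu₀
      have hQu : Q (u₀ : 𝒦) = 0 := u₀.2
      simp [hT, ContinuousLinearMap.prod_apply, map_add, hKu, hQu, hR]
    · rintro ⟨u, rfl⟩
      refine ⟨(K u - K (R (Q u)), Q u), ⟨⟨u - R (Q u), ?_⟩, ?_⟩, ?_⟩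
      · simp [LinearMap.mem_ker, map_sub, hR]
      · simp [hT₀, map_sub]
      · rw [hcoe, hΦ]
        simp [hT]
  -- cokernel identification
  set p := LinearMap.range (T₀ : (LinearMap.ker (Q : 𝒦 →ₗ[ℂ] F)) →ₗ[ℂ] E) with hp
  let g : (E × F) →ₗ[ℂ] (E ⧸ p) := p.mkQ.comp (LinearMap.fst ℂ E F)
  have hgsurj : Function.Surjective g := by
    intro x
    obtain ⟨e, rfl⟩ := p.mkQ_surjective x
    exact ⟨(e, 0), rfl⟩
  have hgker : LinearMap.ker g = p.prod (⊤ : Submodule ℂ F) := by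
    ext q
    simp [g, Submodule.mem_prod, LinearMap.mem_ker, Submodule.Quotient.mk_eq_zero]
  have e1 : ((E × F) ⧸ (p.prod (⊤ : Submodule ℂ F))) ≃ₗ[ℂ] ((E × F) ⧸ LinearMap.range (T : 𝒦 →ₗ[ℂ] (E × F))) :=
    Submodule.Quotient.equiv _ _ Φ.toLinearEquiv hrange
  have e2 : ((E × F) ⧸ (p.prod (⊤ : Submodule ℂ F))) ≃ₗ[ℂ] ((E × F) ⧸ LinearMap.ker g) :=
    Submodule.quotEquivOfEq _ _ hgker.symm
  have e3 : ((E × F) ⧸ LinearMap.ker g) ≃ₗ[ℂ] (E ⧸ p) :=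
    g.quotKerEquivOfSurjective hgsurj
  let ecoker : ((E × F) ⧸ LinearMap.range (T : 𝒦 →ₗ[ℂ] (E × F))) ≃ₗ[ℂ] (E ⧸ p) :=
    e1.symm.trans (e2.trans e3)
  -- closed range iff
  have hset : (LinearMap.range (T : 𝒦 →ₗ[ℂ] (E × F)) : Set (E × F)) =
      (Φ : E × F → E × F) '' ((p : Set E) ×ˢ (Set.univ : Set F)) := by
    rw [← hrange]
    rfl
  have hclosed : IsClosed (p : Set E) ↔ IsClosed (LinearMap.range (T : 𝒦 →ₗ[ℂ] (E × F)) : Set (E × F)) := by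
    rw [hset]
    constructor
    · intro h
      exact (Φ.toHomeomorph.isClosed_image).mpr (h.prod isClosed_univ)
    · intro h
      have h2 : IsClosed ((p : Set E) ×ˢ (Set.univ : Set F)) :=
        (Φ.toHomeomorph.isClosed_image).mp h
      have heq : (p : Set E) = (fun e : E => (e, (0 : F))) ⁻¹' ((p : Set E) ×ˢ Set.univ) := by
        ext e; simp
      rw [heq]
      exact h2.preimage (Continuous.prodMk_left 0)
  -- assemble
  have hfd1 : FiniteDimensional ℂ (LinearMap.ker (T₀ : (LinearMap.ker (Q : 𝒦 →ₗ[ℂ] F)) →ₗ[ℂ] E)) ↔ FiniteDimensional ℂ (LinearMap.ker (T : 𝒦 →ₗ[ℂ] (E × F))) :=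
    ⟨fun h => eker.finiteDimensional, fun h => eker.symm.finiteDimensional⟩
  have hfd2 : FiniteDimensional ℂ (E ⧸ p) ↔ FiniteDimensional ℂ ((E × F) ⧸ LinearMap.range (T : 𝒦 →ₗ[ℂ] (E × F))) :=
    ⟨fun h => ecoker.symm.finiteDimensional, fun h => ecoker.finiteDimensional⟩
  have hidx : fredholmIndex T₀ = fredholmIndex T := by
    unfold fredholmIndex
    rw [eker.finrank_eq, ecoker.finrank_eq]
  constructor
  · rintro ⟨⟨h1, h2, h3⟩, h4⟩
    exact ⟨⟨hfd1.mp h1, hfd2.mp h2, hclosed.mp h3⟩, hidx ▸ h4⟩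
  · rintro ⟨⟨h1, h2, h3⟩, h4⟩
    exact ⟨⟨hfd1.mpr h1, hfd2.mpr h2, hclosed.mpr h3⟩, hidx.symm ▸ h4⟩
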